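/- Direction of descent: let x* minimize the convex quadratic model ϑ(x) = (1/2)xᵀQx + (g + ρCx₀)ᵀx over a convex set F containing x₀ (Q symmetric positive definite, C symmetric). Then the merit function ψ(x) = (1/2)xᵀ(Q + ρC)x + gᵀx satisfies ∇ψ(x₀)ᵀ(x* - x₀) ≤ 0, with strict inequality if x* ≠ x₀. -/

import Mathlib

open Matrix

theorem stmt9_key {n : ℕ} (Q C : Matrix (Fin n) (Fin n) ℝ)
    (hQ : Q.PosDef) (g x₀ xstar : Fin n → ℝ) (ρ : ℝ) :
    ((Q + ρ • C) *ᵥ x₀ + g) ⬝ᵥ (xstar - x₀) =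
      ((1 / 2) * (xstar ⬝ᵥ (Q *ᵥ xstar)) + (g + ρ • (C *ᵥ x₀)) ⬝ᵥ xstar)
      - ((1 / 2) * (x₀ ⬝ᵥ (Q *ᵥ x₀)) + (g + ρ • (C *ᵥ x₀)) ⬝ᵥ x₀)
      - (1 / 2) * ((xstar - x₀) ⬝ᵥ (Q *ᵥ (xstar - x₀))) := by
  have hQt : Qᵀ = Q := (by simpa using hQ.1 : Q.IsSymm).eq
  have hsym : x₀ ⬝ᵥ Q *ᵥ xstar = xstar ⬝ᵥ Q *ᵥ x₀ := by
    rw [dotProduct_mulVec]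
    conv_lhs => rw [← hQt]
    rw [vecMul_transpose, dotProduct_comm]
  have h2 : Q *ᵥ x₀ ⬝ᵥ xstar = xstar ⬝ᵥ Q *ᵥ x₀ := dotProduct_comm _ _
  have h3 : Q *ᵥ x₀ ⬝ᵥ x₀ = x₀ ⬝ᵥ Q *ᵥ x₀ := dotProduct_comm _ _
  simp only [add_mulVec, smul_mulVec, mulVec_sub, dotProduct_add, add_dotProduct,
    dotProduct_sub, sub_dotProduct, smul_dotProduct, dotProduct_smul, smul_eq_mul,
    dotProduct_comm g, dotProduct_comm (ρ • (C *ᵥ x₀))]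
  ring_nf
  linarith [hsym, h2, h3]

theorem stmt_9 {n : ℕ} (Q C : Matrix (Fin n) (Fin n) ℝ)
    (hQ : Q.PosDef) (hC : Cᵀ = C) (g x₀ : Fin n → ℝ) (ρ : ℝ)
    (F : Set (Fin n → ℝ)) (hF : Convex ℝ F) (hx₀ : x₀ ∈ F)
    (xstar : Fin n → ℝ) (hxstar : xstar ∈ F)
    (hmin : ∀ x ∈ F,
      (1 / 2) * (xstar ⬝ᵥ (Q *ᵥ xstar)) + (g + ρ • (C *ᵥ x₀)) ⬝ᵥ xstar ≤
      (1 / 2) * (x ⬝ᵥ (Q *ᵥ x)) + (g + ρ • (C *ᵥ x₀)) ⬝ᵥ x) :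
    ((Q + ρ • C) *ᵥ x₀ + g) ⬝ᵥ (xstar - x₀) ≤ 0 ∧
    (xstar ≠ x₀ → ((Q + ρ • C) *ᵥ x₀ + g) ⬝ᵥ (xstar - x₀) < 0) := by
  have hkey := stmt9_key Q C hQ g x₀ xstar ρ
  have hm := hmin x₀ hx₀
  have hpos : 0 ≤ (xstar - x₀) ⬝ᵥ (Q *ᵥ (xstar - x₀)) := by
    rcases eq_or_ne (xstar - x₀) 0 with h | h
    · simp [h]
    · exact le_of_lt (hQ.dotProduct_mulVec_pos h)
  constructor
  · rw [hkey]; linarith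
  · intro hne
    have h : xstar - x₀ ≠ 0 := sub_ne_zero.mpr hne
    have := hQ.dotProduct_mulVec_pos h
    simp only [star_trivial] at this
    rw [hkey]; linarith
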